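/- If g ∈ G_m(a^r u^i v) for some integers r, i and m ∈ ℕ, then g^m lies in the central subgroup ⟨a^(2^(l-1))⟩ of order 2. -/

import Mathlib

namespace ZkDl

def n₁ (l : ℕ) : ℕ := 2 ^ (l - 1) + 1
def n₂ (l : ℕ) : ℕ := 2 ^ (l - 1) - 1

/-- The relations of the presentation
`⟨a, u, v | a^(2^l) = u^k = v^2 = 1, u a u⁻¹ = a^(n₁), v a v = a^(n₂), v u v = u⁻¹⟩`,
with generators `a = 0`, `u = 1`, `v = 2` in `Fin 3`. -/
def rels (l k : ℕ) : Set (FreeGroup (Fin 3)) :=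
  { FreeGroup.of 0 ^ 2 ^ l,
    FreeGroup.of 1 ^ k,
    FreeGroup.of 2 ^ 2,
    FreeGroup.of 1 * FreeGroup.of 0 * (FreeGroup.of 1)⁻¹ * (FreeGroup.of 0 ^ n₁ l)⁻¹,
    FreeGroup.of 2 * FreeGroup.of 0 * FreeGroup.of 2 * (FreeGroup.of 0 ^ n₂ l)⁻¹,
    FreeGroup.of 2 * FreeGroup.of 1 * FreeGroup.of 2 * FreeGroup.of 1 }

/-- The group `Z_{2^l} ⋊ D_k` given by the presentation above. -/
abbrev G (l k : ℕ) : Type := PresentedGroup (rels l k)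

def a (l k : ℕ) : G l k := PresentedGroup.of 0
def u (l k : ℕ) : G l k := PresentedGroup.of 1
def v (l k : ℕ) : G l k := PresentedGroup.of 2

end ZkDl

namespace ZkDl
variable {l k : ℕ}

lemma mk_rel {r : FreeGroup (Fin 3)} (h : r ∈ rels l k) : PresentedGroup.mk (rels l k) r = 1 :=
  (QuotientGroup.eq_one_iff r).mpr (Subgroup.subset_normalClosure h)

lemma rel_a : a l k ^ (2 ^ l) = 1 := by
  have := mk_rel (l := l) (k := k) (Or.inl rfl)
  simpa [a, PresentedGroup.of, map_pow] using this

lemma rel_u : u l k ^ k = 1 := by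
  have := mk_rel (l := l) (k := k) (Or.inr (Or.inl rfl))
  simpa [u, PresentedGroup.of, map_pow] using this

lemma rel_v : v l k ^ 2 = 1 := by
  have := mk_rel (l := l) (k := k) (Or.inr (Or.inr (Or.inl rfl)))
  simpa [v, PresentedGroup.of, map_pow] using this

lemma rel_ua : u l k * a l k * (u l k)⁻¹ = a l k ^ (n₁ l) := by
  have := mk_rel (l := l) (k := k) (Or.inr (Or.inr (Or.inr (Or.inl rfl))))
  simp only [map_mul, map_inv, map_pow] at this
  have h := mul_eq_one_iff_eq_inv.mp this
  simpa [a, u, PresentedGroup.of] using h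

lemma rel_va : v l k * a l k * v l k = a l k ^ (n₂ l) := by
  have := mk_rel (l := l) (k := k) (Or.inr (Or.inr (Or.inr (Or.inr (Or.inl rfl)))))
  simp only [map_mul, map_inv, map_pow] at this
  have h := mul_eq_one_iff_eq_inv.mp this
  simpa [a, v, PresentedGroup.of] using h

lemma rel_vu : v l k * u l k * v l k = (u l k)⁻¹ := by
  have := mk_rel (l := l) (k := k) (Or.inr (Or.inr (Or.inr (Or.inr (Or.inr rfl)))))
  simp only [map_mul, map_inv, map_pow] at this
  have h := mul_eq_one_iff_eq_inv.mp this
  simpa [u, v, PresentedGroup.of] using h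

lemma v_inv : (v l k)⁻¹ = v l k := by
  have := rel_v (l := l) (k := k)
  rw [pow_two] at this
  exact inv_eq_of_mul_eq_one_left this


section Arith
variable {l : ℕ}
local notation "N" => (2:ℕ) ^ l
local notation "H" => ((2 ^ (l-1) : ℕ) : ZMod N)

lemma hH2 (hl : 3 ≤ l) : H * H = 0 := by
  rw [← Nat.cast_mul, ZMod.natCast_eq_zero_iff, ← pow_add]
  exact pow_dvd_pow 2 (by omega)

lemma hHH (hl : 3 ≤ l) : H + H = 0 := by
  rw [← Nat.cast_add, ZMod.natCast_eq_zero_iff]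
  have : 2 ^ (l-1) + 2 ^ (l-1) = 2 ^ l := by
    rw [← two_mul, ← pow_succ']; congr 1; omega
  rw [this]

lemma hHne (hl : 3 ≤ l) : H ≠ 0 := by
  rw [Ne, ZMod.natCast_eq_zero_iff]
  intro h
  have := Nat.le_of_dvd (by positivity) h
  have := Nat.pow_lt_pow_right (a := 2) one_lt_two (by omega : l - 1 < l)
  omega

lemma cast_n₁ : ((n₁ l : ℕ) : ZMod N) = H + 1 := by
  simp [n₁]

lemma cast_n₂ (hl : 3 ≤ l) : ((n₂ l : ℕ) : ZMod N) = H - 1 := by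
  have h1 : (1:ℕ) ≤ 2 ^ (l-1) := Nat.one_le_two_pow
  rw [n₂, Nat.cast_sub h1]
  simp

lemma n₁_sq (hl : 3 ≤ l) : ((n₁ l : ℕ) : ZMod N) * ((n₁ l : ℕ) : ZMod N) = 1 := by
  rw [cast_n₁]
  have h2 := hH2 (l := l) hl
  have hh := hHH (l := l) hl
  ring_nf
  linear_combination h2 + hh

lemma n₂_sq (hl : 3 ≤ l) : ((n₂ l : ℕ) : ZMod N) * ((n₂ l : ℕ) : ZMod N) = 1 := by
  rw [cast_n₂ hl]
  have h2 := hH2 (l := l) hl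
  have hh := hHH (l := l) hl
  ring_nf
  linear_combination h2 - hh

lemma n₁n₂ (hl : 3 ≤ l) : ((n₁ l : ℕ) : ZMod N) * ((n₂ l : ℕ) : ZMod N) = -1 := by
  rw [cast_n₁, cast_n₂ hl]
  have h2 := hH2 (l := l) hl
  ring_nf
  linear_combination h2

end Arith

section GroupLemmas
variable {l k : ℕ}
local notation "A" => a l k
local notation "U" => u l k
local notation "V" => v l k
local notation "N" => (2:ℕ) ^ l

lemma apow_congr {s s' : ℤ} (h : ((s : ℤ) : ZMod N) = ((s' : ℤ) : ZMod N)) :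
    A ^ s = A ^ s' := by
  have hd : ((2^l : ℕ) : ℤ) ∣ s - s' := by
    rwa [← ZMod.intCast_zmod_eq_zero_iff_dvd, Int.cast_sub, sub_eq_zero]
  obtain ⟨q, hq⟩ := hd
  have : s = s' + (2^l : ℕ) * q := by push_cast at hq ⊢; linarith
  rw [this, zpow_add, zpow_mul, zpow_natCast, rel_a, one_zpow, mul_one]

lemma ua_zpow (s : ℤ) : U * A ^ s * U⁻¹ = A ^ (s * (n₁ l : ℤ)) := by
  have h : ((MulAut.conj U) (A)) ^ s = (A ^ (n₁ l : ℕ)) ^ s := by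
    rw [MulAut.conj_apply, rel_ua]
  rw [← map_zpow, MulAut.conj_apply] at h
  rw [h, ← zpow_natCast (A) (n₁ l), ← zpow_mul, mul_comm]

lemma va_zpow (s : ℤ) : V * A ^ s * V = A ^ (s * (n₂ l : ℤ)) := by
  have h : ((MulAut.conj V) (A)) ^ s = (A ^ (n₂ l : ℕ)) ^ s := by
    rw [MulAut.conj_apply, v_inv, rel_va]
  rw [← map_zpow, MulAut.conj_apply, v_inv] at h
  rw [h, ← zpow_natCast (A) (n₂ l), ← zpow_mul, mul_comm]

lemma vu_zpow (t : ℤ) : V * U ^ t * V = U ^ (-t) := by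
  have h : ((MulAut.conj V) (U)) ^ t = (U⁻¹) ^ t := by
    rw [MulAut.conj_apply, v_inv, rel_vu]
  rw [← map_zpow, MulAut.conj_apply, v_inv] at h
  rw [h, inv_zpow, ← zpow_neg]

lemma ua_zpow_inv (hl : 3 ≤ l) (s : ℤ) : U⁻¹ * A ^ s * U = A ^ (s * (n₁ l : ℤ)) := by
  have h := ua_zpow (l := l) (k := k) (s * (n₁ l : ℤ))
  have h2 : A ^ (s * (n₁ l : ℤ) * (n₁ l : ℤ)) = A ^ s := by
    apply apow_congr
    push_cast
    have := n₁_sq (l := l) hl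
    push_cast at this
    rw [mul_assoc, this, mul_one]
  rw [h2] at h
  rw [← h]; group

end GroupLemmas

section NormalForm
variable {l k : ℕ}
local notation "A" => a l k
local notation "U" => u l k
local notation "V" => v l k
local notation "N" => (2:ℕ) ^ l

lemma uconj_or (hl : 3 ≤ l) : ∀ (t : ℤ), ∀ (s : ℤ),
    U ^ t * A ^ s * U ^ (-t) = A ^ s ∨ U ^ t * A ^ s * U ^ (-t) = A ^ (s * (n₁ l : ℤ)) := by
  intro t
  induction t using Int.induction_on with
  | zero => intro s; left; simp
  | succ n ih =>
    intro s
    have key : U ^ ((n:ℤ)+1) * A ^ s * U ^ (-((n:ℤ)+1)) =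
        U ^ (n:ℤ) * (A ^ (s * (n₁ l : ℤ))) * U ^ (-(n:ℤ)) := by
      have h1 : U * A ^ s * U⁻¹ = A ^ (s * (n₁ l : ℤ)) := ua_zpow s
      rw [← h1]; group
    rcases ih (s * (n₁ l : ℤ)) with h | h
    · right; rw [key, h]
    · left
      rw [key, h]
      apply apow_congr
      push_cast
      have := n₁_sq (l := l) hl
      push_cast at this
      rw [mul_assoc, this, mul_one]
  | pred n ih =>
    intro s
    have key : U ^ (-(n:ℤ)-1) * A ^ s * U ^ (-(-(n:ℤ)-1)) =
        U ^ (-(n:ℤ)) * (A ^ (s * (n₁ l : ℤ))) * U ^ (-(-(n:ℤ))) := by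
      have h1 : U⁻¹ * A ^ s * U = A ^ (s * (n₁ l : ℤ)) := ua_zpow_inv hl s
      rw [← h1]; group
    rcases ih (s * (n₁ l : ℤ)) with h | h
    · right; rw [key, h]
    · left
      rw [key, h]
      apply apow_congr
      push_cast
      have := n₁_sq (l := l) hl
      push_cast at this
      rw [mul_assoc, this, mul_one]

lemma u_move (hl : 3 ≤ l) (t s : ℤ) :
    ∃ s' : ℤ, U ^ t * A ^ s = A ^ s' * U ^ t := by
  rcases uconj_or (l := l) (k := k) hl t s with h | h
  · refine ⟨s, ?_⟩
    conv_rhs => rw [← h]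
    group
  · refine ⟨s * (n₁ l : ℤ), ?_⟩
    conv_rhs => rw [← h]
    group

lemma v_move (s : ℤ) : V * A ^ s = A ^ (s * (n₂ l : ℤ)) * V := by
  have h := va_zpow (l := l) (k := k) s
  have hv2 : V * V = 1 := by rw [← pow_two]; exact rel_v
  rw [← h, mul_assoc (V * A ^ s), hv2, mul_one]

lemma vu_move (t : ℤ) : V * U ^ t = U ^ (-t) * V := by
  have h := vu_zpow (l := l) (k := k) t
  have hv2 : V * V = 1 := by rw [← pow_two]; exact rel_v
  rw [← h, mul_assoc (V * U ^ t), hv2, mul_one]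

/-- Normal form: every element of `G` is `a^s u^t` or `a^s u^t v`. -/
lemma normal_form (hl : 3 ≤ l) (x : G l k) :
    ∃ s t : ℤ, x = A ^ s * U ^ t ∨ x = A ^ s * U ^ t * V := by
  have hgen : x ∈ Subgroup.closure (Set.range (PresentedGroup.of : Fin 3 → G l k)) := by
    rw [PresentedGroup.closure_range_of]; trivial
  induction hgen using Subgroup.closure_induction with
  | mem y hy =>
    obtain ⟨j, rfl⟩ := hy
    fin_cases j
    · exact ⟨1, 0, Or.inl (by simp [a])⟩
    · exact ⟨0, 1, Or.inl (by simp [u])⟩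
    · exact ⟨0, 0, Or.inr (by simp [v])⟩
  | one => exact ⟨0, 0, Or.inl (by simp)⟩
  | mul y z _ _ hy hz =>
    obtain ⟨s, t, hy⟩ := hy
    obtain ⟨s', t', hz⟩ := hz
    rcases hy with rfl | rfl <;> rcases hz with rfl | rfl
    · obtain ⟨s'', h⟩ := u_move (l := l) (k := k) hl t s'
      refine ⟨s + s'', t + t', Or.inl ?_⟩
      rw [zpow_add, zpow_add]
      calc A^s * U^t * (A^s' * U^t') = A^s * (U^t * A^s') * U^t' := by group
        _ = A^s * (A^s'' * U^t) * U^t' := by rw [h]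
        _ = A^s * A^s'' * (U^t * U^t') := by group
    · obtain ⟨s'', h⟩ := u_move (l := l) (k := k) hl t s'
      refine ⟨s + s'', t + t', Or.inr ?_⟩
      rw [zpow_add, zpow_add]
      calc A^s * U^t * (A^s' * U^t' * V) = A^s * (U^t * A^s') * U^t' * V := by group
        _ = A^s * (A^s'' * U^t) * U^t' * V := by rw [h]
        _ = A^s * A^s'' * (U^t * U^t') * V := by group
    · -- (A^s U^t V)(A^s' U^t')
      obtain ⟨s'', h⟩ := u_move (l := l) (k := k) hl t (s' * (n₂ l : ℤ))
      refine ⟨s + s'', t + (-t'), Or.inr ?_⟩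
      rw [zpow_add, zpow_add]
      calc A^s * U^t * V * (A^s' * U^t')
          = A^s * U^t * (V * A^s') * U^t' := by group
        _ = A^s * U^t * (A^(s' * (n₂ l : ℤ)) * V) * U^t' := by rw [v_move]
        _ = A^s * (U^t * A^(s' * (n₂ l : ℤ))) * (V * U^t') := by group
        _ = A^s * (A^s'' * U^t) * (U^(-t') * V) := by rw [h, vu_move]
        _ = A^s * A^s'' * (U^t * U^(-t')) * V := by group
    · obtain ⟨s'', h⟩ := u_move (l := l) (k := k) hl t (s' * (n₂ l : ℤ))
      refine ⟨s + s'', t + (-t'), Or.inl ?_⟩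
      rw [zpow_add, zpow_add]
      have hv := rel_v (l := l) (k := k)
      calc A^s * U^t * V * (A^s' * U^t' * V)
          = A^s * U^t * (V * A^s') * U^t' * V := by group
        _ = A^s * U^t * (A^(s' * (n₂ l : ℤ)) * V) * U^t' * V := by rw [v_move]
        _ = A^s * (U^t * A^(s' * (n₂ l : ℤ))) * (V * U^t') * V := by group
        _ = A^s * (A^s'' * U^t) * (U^(-t') * V) * V := by rw [h, vu_move]
        _ = A^s * A^s'' * (U^t * U^(-t')) * (V * V) := by group
        _ = A^s * A^s'' * (U^t * U^(-t')) := by rw [← pow_two, hv, mul_one]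
  | inv y _ hy =>
    obtain ⟨s, t, hy⟩ := hy
    rcases hy with rfl | rfl
    · obtain ⟨s'', h⟩ := u_move (l := l) (k := k) hl (-t) (-s)
      refine ⟨s'', -t, Or.inl ?_⟩
      calc (A^s * U^t)⁻¹ = U^(-t) * A^(-s) := by group
        _ = A^s'' * U^(-t) := h
    · obtain ⟨s'', h⟩ := u_move (l := l) (k := k) hl t (-s * (n₂ l : ℤ))
      refine ⟨s'', t, Or.inr ?_⟩
      have hv := v_inv (l := l) (k := k)
      calc (A^s * U^t * V)⁻¹ = V⁻¹ * U^(-t) * A^(-s) := by group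
        _ = V * U^(-t) * A^(-s) := by rw [hv]
        _ = U^t * V * A^(-s) := by rw [vu_move, neg_neg]
        _ = U^t * (A^(-s * (n₂ l : ℤ)) * V) := by rw [mul_assoc, v_move]
        _ = (U^t * A^(-s * (n₂ l : ℤ))) * V := by group
        _ = A^s'' * U^t * V := by rw [h]

end NormalForm


section Homs

/-- Multiplication by a self-inverse element as a permutation. -/
def mulH {M : ℕ} (c : ZMod M) (hc : c * c = 1) : Equiv.Perm (ZMod M) :=
  ⟨(c * ·), (c * ·), fun x => by simp [← mul_assoc, hc], fun x => by simp [← mul_assoc, hc]⟩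

lemma mulH_apply {M : ℕ} (c : ZMod M) (hc : c * c = 1) (x : ZMod M) : mulH c hc x = c * x := rfl

lemma mulH_inv {M : ℕ} (c : ZMod M) (hc : c * c = 1) : (mulH c hc)⁻¹ = mulH c hc := rfl

lemma mulH_sq {M : ℕ} (c : ZMod M) (hc : c * c = 1) : (mulH c hc) ^ 2 = 1 := by
  ext x
  simp [pow_two, Equiv.Perm.mul_apply, mulH_apply, ← mul_assoc, hc]

def permAux (l : ℕ) (hl : 3 ≤ l) : Fin 3 → Equiv.Perm (ZMod (2 ^ l)) :=
  ![Equiv.addRight 1, mulH ((n₁ l : ℕ) : ZMod (2 ^ l)) (n₁_sq hl),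
    mulH ((n₂ l : ℕ) : ZMod (2 ^ l)) (n₂_sq hl)]

lemma permAux0 (l : ℕ) (hl : 3 ≤ l) : permAux l hl 0 = Equiv.addRight 1 := rfl
lemma permAux1 (l : ℕ) (hl : 3 ≤ l) :
    permAux l hl 1 = mulH ((n₁ l : ℕ) : ZMod (2 ^ l)) (n₁_sq hl) := rfl
lemma permAux2 (l : ℕ) (hl : 3 ≤ l) :
    permAux l hl 2 = mulH ((n₂ l : ℕ) : ZMod (2 ^ l)) (n₂_sq hl) := rfl

lemma perm_rels (l k : ℕ) (hl : 3 ≤ l) (hk : 4 ∣ k) :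
    ∀ r ∈ rels l k, FreeGroup.lift (permAux l hl) r = 1 := by
  obtain ⟨k', rfl⟩ := hk
  intro r hr
  have hn1 := n₁_sq (l := l) hl
  have hn2 := n₂_sq (l := l) hl
  rcases hr with rfl | rfl | rfl | rfl | rfl | rfl
  · rw [map_pow, FreeGroup.lift_apply_of, permAux0, Equiv.nsmul_addRight]
    have h0 : ((2 ^ l : ℕ) • (1 : ZMod (2 ^ l))) = 0 := by
      simp [ZMod.natCast_self]
    rw [h0, Equiv.addRight_zero]
  · rw [map_pow, FreeGroup.lift_apply_of, permAux1,
      show 4 * k' = 2 * (2 * k') by ring, pow_mul, mulH_sq, one_pow]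
  · rw [map_pow, FreeGroup.lift_apply_of, permAux2, mulH_sq]
  · simp only [map_mul, map_inv, map_pow, FreeGroup.lift_apply_of, permAux0, permAux1,
      Equiv.nsmul_addRight, Equiv.neg_addRight, mulH_inv]
    ext x
    simp only [Equiv.Perm.mul_apply, Equiv.Perm.one_apply, mulH_apply,
      Equiv.coe_addRight, nsmul_eq_mul, mul_one]
    linear_combination (x - ((n₁ l : ℕ) : ZMod (2 ^ l))) * hn1
  · simp only [map_mul, map_inv, map_pow, FreeGroup.lift_apply_of, permAux0, permAux2,
      Equiv.nsmul_addRight, Equiv.neg_addRight, mulH_inv]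
    ext x
    simp only [Equiv.Perm.mul_apply, Equiv.Perm.one_apply, mulH_apply,
      Equiv.coe_addRight, nsmul_eq_mul, mul_one]
    linear_combination (x - ((n₂ l : ℕ) : ZMod (2 ^ l))) * hn2
  · simp only [map_mul, FreeGroup.lift_apply_of, permAux1, permAux2]
    ext x
    simp only [Equiv.Perm.mul_apply, Equiv.Perm.one_apply, mulH_apply]
    linear_combination (((n₁ l : ℕ) : ZMod (2 ^ l)) * ((n₁ l : ℕ) : ZMod (2 ^ l)) * x) * hn2
      + x * hn1

end Homs

section Central
variable {l k : ℕ}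
local notation "A" => a l k
local notation "U" => u l k
local notation "V" => v l k
local notation "N" => (2:ℕ) ^ l
local notation "Z" => a l k ^ (2 ^ (l - 1) : ℕ)

/-- The homomorphism to the permutation representation. -/
noncomputable def φ (l k : ℕ) (hl : 3 ≤ l) (hk : 4 ∣ k) : G l k →* Equiv.Perm (ZMod (2 ^ l)) :=
  PresentedGroup.toGroup (perm_rels l k hl hk)

lemma z_sq (hl : 3 ≤ l) : Z ^ 2 = 1 := by
  rw [← pow_mul]
  have hc : 2 ^ (l - 1) * 2 = 2 ^ l := by
    rw [mul_comm, ← pow_succ']; congr 1; omega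
  rw [hc, rel_a]

lemma z_ne_one (hl : 3 ≤ l) (hk : 4 ∣ k) : Z ≠ 1 := by
  intro h
  have := congrArg (φ l k hl hk) h
  rw [map_pow, map_one] at this
  have ha : φ l k hl hk A = Equiv.addRight 1 := PresentedGroup.toGroup.of _
  rw [ha, Equiv.nsmul_addRight] at this
  have := congrArg (fun e => e (0 : ZMod (2 ^ l))) this
  simp only [Equiv.coe_addRight, Equiv.Perm.one_apply, zero_add, nsmul_eq_mul, mul_one] at this
  exact hHne (l := l) hl this

lemma cast_H_n₁ (hl : 3 ≤ l) :
    A ^ (((2 ^ (l - 1) : ℕ) : ℤ) * (n₁ l : ℤ)) = A ^ ((2 ^ (l - 1) : ℕ) : ℤ) := by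
  apply apow_congr
  rw [Int.cast_mul, Int.cast_natCast, Int.cast_natCast, cast_n₁]
  linear_combination hH2 (l := l) hl

lemma cast_H_n₂ (hl : 3 ≤ l) :
    A ^ (((2 ^ (l - 1) : ℕ) : ℤ) * (n₂ l : ℤ)) = A ^ ((2 ^ (l - 1) : ℕ) : ℤ) := by
  apply apow_congr
  rw [Int.cast_mul, Int.cast_natCast, Int.cast_natCast, cast_n₂ hl]
  linear_combination hH2 (l := l) hl - hHH (l := l) hl

lemma z_comm_u (hl : 3 ≤ l) : U * Z = Z * U := by
  have h := ua_zpow (l := l) (k := k) ((2 ^ (l - 1) : ℕ) : ℤ)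
  rw [cast_H_n₁ hl, zpow_natCast] at h
  calc U * Z = (U * Z * U⁻¹) * U := by group
    _ = Z * U := by rw [h]

lemma z_comm_v (hl : 3 ≤ l) : V * Z = Z * V := by
  have h := va_zpow (l := l) (k := k) ((2 ^ (l - 1) : ℕ) : ℤ)
  rw [cast_H_n₂ hl, zpow_natCast] at h
  calc V * Z = V * Z * V * V⁻¹ := by group
    _ = Z * V⁻¹ := by rw [h]
    _ = Z * V := by rw [v_inv]

lemma z_central (hl : 3 ≤ l) : Z ∈ Subgroup.center (G l k) := by
  rw [Subgroup.mem_center_iff]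
  intro g
  have hgen : g ∈ Subgroup.closure (Set.range (PresentedGroup.of : Fin 3 → G l k)) := by
    rw [PresentedGroup.closure_range_of]; trivial
  induction hgen using Subgroup.closure_induction with
  | mem y hy =>
    obtain ⟨j, rfl⟩ := hy
    fin_cases j
    · show A * Z = Z * A
      rw [← pow_succ', ← pow_succ]
    · exact z_comm_u hl
    · exact z_comm_v hl
  | one => rw [one_mul, mul_one]
  | mul y w _ _ hy hw =>
    rw [mul_assoc, hw, ← mul_assoc, hy, mul_assoc]
  | inv y _ hy =>
    calc y⁻¹ * Z = y⁻¹ * Z * y * y⁻¹ := by group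
      _ = y⁻¹ * (y * Z) * y⁻¹ := by rw [mul_assoc y⁻¹ Z y, ← hy]
      _ = Z * y⁻¹ := by group

end Central

section Eps
namespace EpsDef

def epsAux : Fin 3 → Multiplicative (ZMod 2) := ![1, 1, Multiplicative.ofAdd 1]

lemma eps_rels (l k : ℕ) : ∀ r ∈ rels l k, FreeGroup.lift epsAux r = 1 := by
  intro r hr
  rcases hr with rfl | rfl | rfl | rfl | rfl | rfl <;>
    simp only [map_mul, map_inv, map_pow, FreeGroup.lift_apply_of, epsAux,
      Matrix.cons_val_zero, Matrix.cons_val_one, Matrix.head_cons, one_pow, one_mul, mul_one,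
      inv_one]
  all_goals first | rfl | decide

end EpsDef

noncomputable def ε (l k : ℕ) : G l k →* Multiplicative (ZMod 2) :=
  PresentedGroup.toGroup (EpsDef.eps_rels l k)

variable {l k : ℕ}
local notation "A" => a l k
local notation "U" => u l k
local notation "V" => v l k

lemma eps_a : ε l k A = 1 := PresentedGroup.toGroup.of _
lemma eps_u : ε l k U = 1 := PresentedGroup.toGroup.of _
lemma eps_v : ε l k V = Multiplicative.ofAdd 1 := PresentedGroup.toGroup.of _

lemma eps_nf1 (s t : ℤ) : ε l k (A ^ s * U ^ t) = 1 := by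
  rw [map_mul, map_zpow, map_zpow, eps_a, eps_u, one_zpow, one_zpow, one_mul]

lemma eps_nf2 (s t : ℤ) : ε l k (A ^ s * U ^ t * V) = Multiplicative.ofAdd 1 := by
  rw [map_mul, eps_nf1, eps_v, one_mul]

end Eps

section Square
variable {l k : ℕ}
local notation "A" => a l k
local notation "U" => u l k
local notation "V" => v l k
local notation "N" => (2:ℕ) ^ l
local notation "Z" => a l k ^ (2 ^ (l - 1) : ℕ)

lemma sq_nf (hl : 3 ≤ l) (s t : ℤ) :
    (A ^ s * U ^ t * V) ^ 2 = 1 ∨ (A ^ s * U ^ t * V) ^ 2 = Z := by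
  have hn1 : ((n₁ l : ℕ) : ZMod N) = 2 ^ (l - 1) + 1 := by
    rw [cast_n₁]; push_cast; ring
  have hn2 : ((n₂ l : ℕ) : ZMod N) = 2 ^ (l - 1) - 1 := by
    rw [cast_n₂ hl]; push_cast; ring
  have h2 := hH2 (l := l) hl
  have hh := hHH (l := l) hl
  push_cast at h2 hh
  have key : (A ^ s * U ^ t * V) ^ 2 = A ^ s * (U ^ t * A ^ (s * (n₂ l : ℤ)) * U ^ (-t)) := by
    have hv2 : V * V = 1 := by rw [← pow_two]; exact rel_v
    calc (A ^ s * U ^ t * V) ^ 2 = A ^ s * U ^ t * (V * A ^ s) * U ^ t * V := by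
          rw [pow_two]; group
      _ = A ^ s * U ^ t * (A ^ (s * (n₂ l : ℤ)) * V) * U ^ t * V := by rw [v_move]
      _ = A ^ s * (U ^ t * A ^ (s * (n₂ l : ℤ))) * (V * U ^ t) * V := by group
      _ = A ^ s * (U ^ t * A ^ (s * (n₂ l : ℤ))) * (U ^ (-t) * V) * V := by rw [vu_move]
      _ = A ^ s * (U ^ t * A ^ (s * (n₂ l : ℤ)) * U ^ (-t)) * (V * V) := by group
      _ = _ := by rw [hv2, mul_one]
  rcases uconj_or (l := l) (k := k) hl t (s * (n₂ l : ℤ)) with h | h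
  · rw [key, h, ← zpow_add]
    rcases Int.even_or_odd s with ⟨c, rfl⟩ | ⟨c, rfl⟩
    · left
      have : A ^ ((c + c) + (c + c) * (n₂ l : ℤ)) = A ^ (0 : ℤ) := by
        apply apow_congr
        push_cast
        rw [hn2]
        linear_combination (c : ZMod N) * hh
      rw [this, zpow_zero]
    · right
      have : A ^ ((2*c + 1) + (2*c + 1) * (n₂ l : ℤ)) = A ^ ((2 ^ (l - 1) : ℕ) : ℤ) := by
        apply apow_congr
        push_cast
        rw [hn2]
        linear_combination (c : ZMod N) * hh
      rw [this, zpow_natCast]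
  · rw [key, h, ← zpow_add]
    left
    have : A ^ (s + s * (n₂ l : ℤ) * (n₁ l : ℤ)) = A ^ (0 : ℤ) := by
      apply apow_congr
      push_cast
      rw [hn1, hn2]
      linear_combination (s : ZMod N) * h2
    rw [this, zpow_zero]

lemma zpow_one_or (hl : 3 ≤ l) (j : ℕ) : Z ^ j = 1 ∨ Z ^ j = Z := by
  rcases Nat.even_or_odd j with ⟨q, rfl⟩ | ⟨q, rfl⟩
  · left; rw [← two_mul, pow_mul, z_sq hl, one_pow]
  · right; rw [pow_add, pow_mul, z_sq hl, one_pow, one_mul, pow_one]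

end Square
end ZkDl

section Telescope
variable {Γ : Type*} [Group Γ]

lemma telescope_prod (g₀ x : Γ) : ∀ m : ℕ,
    ((List.range m).map (fun j => x ^ (-(j : ℤ)) * g₀ * x ^ (j : ℤ))).prod
      = (g₀ * x⁻¹) ^ m * x ^ m := by
  intro m
  induction m with
  | zero => simp
  | succ n ih =>
    rw [List.range_succ]
    simp only [List.bind_eq_flatMap, List.flatMap_append, List.map_append, List.prod_append,
      List.flatMap_cons, List.flatMap_nil, List.append_nil, List.pure_def, List.map_cons,
      List.map_nil, List.prod_cons, List.prod_nil, mul_one] at ih ⊢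
    rw [ih, pow_succ (g₀ * x⁻¹), pow_succ x]
    group
end Telescope


open ZkDl

/-- The set `G_m(g) = { h ∈ G : ∏_{j=0}^{m-1} h^{-j} g h^j = 1 }`. -/
def Gm (l k : ℕ) (g : G l k) (m : ℕ) : Set (G l k) :=
  {h : G l k | ((List.range m).map (fun j => h ^ (-(j : ℤ)) * g * h ^ (j : ℤ))).prod = 1}

theorem pow_mem_central_subgroup (l k : ℕ) (hl : 3 ≤ l) (hk : 4 ∣ k)
    (r i : ℤ) (m : ℕ) (g : G l k)
    (hg : g ∈ Gm l k (a l k ^ r * u l k ^ i * v l k) m) :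
    g ^ m ∈ Subgroup.closure {a l k ^ (2 ^ (l - 1))} ∧
    Subgroup.closure {a l k ^ (2 ^ (l - 1))} ≤ Subgroup.center (G l k) ∧
    Nat.card (Subgroup.closure {a l k ^ (2 ^ (l - 1))} : Subgroup (G l k)) = 2 := by

  set A := a l k
  set U := u l k
  set V := v l k
  set Z := a l k ^ (2 ^ (l - 1)) with hZ
  set g₀ : G l k := A ^ r * U ^ i * V with hg₀
  -- telescoping
  have htel : (g₀ * g⁻¹) ^ m * g ^ m = 1 := by
    rw [← telescope_prod g₀ g m]; exact hg
  set c : G l k := g * g₀⁻¹ with hc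
  have hgm : g ^ m = c ^ m := by
    have h1 : g ^ m = ((g₀ * g⁻¹) ^ m)⁻¹ := eq_inv_of_mul_eq_one_right htel
    rw [h1, ← inv_pow, mul_inv_rev, inv_inv, hc]
  -- epsilon values
  have heps0 : ε l k g₀ = Multiplicative.ofAdd 1 := eps_nf2 r i
  -- main membership claim
  have hmain : g ^ m = 1 ∨ g ^ m = Z := by
    obtain ⟨s, t, hnf⟩ := normal_form (k := k) hl g
    have hne : (Multiplicative.ofAdd (1 : ZMod 2)) ≠ 1 := by decide
    rcases hnf with rfl | rfl
    · -- g has no v; c must have v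
      have hepsg : ε l k (A ^ s * U ^ t) = 1 := eps_nf1 s t
      have hepsc : ε l k c = Multiplicative.ofAdd 1 := by
        rw [hc, map_mul, map_inv, hepsg, heps0, one_mul]
        decide
      -- m is even
      have hm2 : 2 ∣ m := by
        have := congrArg (ε l k) hgm
        rw [map_pow, map_pow, hepsg, hepsc, one_pow] at this
        have h0 : (Multiplicative.ofAdd (1 : ZMod 2)) ^ m = Multiplicative.ofAdd ((m : ZMod 2)) := by
          rw [← ofAdd_nsmul]
          congr 1
          simp [nsmul_eq_mul]
        rw [h0] at this
        have : ((m : ZMod 2)) = 0 := (Multiplicative.ofAdd.injective this.symm)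
        exact (ZMod.natCast_eq_zero_iff m 2).mp this
      obtain ⟨j, rfl⟩ := hm2
      obtain ⟨s', t', hnc⟩ := normal_form (k := k) hl c
      rcases hnc with hnc | hnc
      · exfalso
        rw [hnc, eps_nf1] at hepsc
        exact hne hepsc.symm
      · have hsq := sq_nf (k := k) hl s' t'
        rw [← hnc] at hsq
        rw [hgm, pow_mul]
        rcases hsq with h | h
        · left; rw [h, one_pow]
        · rw [h]; exact zpow_one_or hl j
    · -- g has v
      have hepsg : ε l k (A ^ s * U ^ t * V) = Multiplicative.ofAdd 1 := eps_nf2 s t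
      have hepsc : ε l k c = 1 := by
        rw [hc, map_mul, map_inv, hepsg, heps0]
        decide
      have hm2 : 2 ∣ m := by
        have := congrArg (ε l k) hgm
        rw [map_pow, map_pow, hepsg, hepsc, one_pow] at this
        have h0 : (Multiplicative.ofAdd (1 : ZMod 2)) ^ m = Multiplicative.ofAdd ((m : ZMod 2)) := by
          rw [← ofAdd_nsmul]
          congr 1
          simp [nsmul_eq_mul]
        rw [h0] at this
        have : ((m : ZMod 2)) = 0 := (Multiplicative.ofAdd.injective this)
        exact (ZMod.natCast_eq_zero_iff m 2).mp this
      obtain ⟨j, rfl⟩ := hm2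
      have hsq := sq_nf (k := k) hl s t
      rw [pow_mul]
      rcases hsq with h | h
      · left; rw [h, one_pow]
      · rw [h]; exact zpow_one_or hl j
  refine ⟨?_, ?_, ?_⟩
  · rcases hmain with h | h
    · rw [h]; exact Subgroup.one_mem _
    · rw [h]; exact Subgroup.subset_closure rfl
  · rw [Subgroup.closure_le]
    intro x hx
    rcases hx with rfl
    exact z_central hl
  · rw [← Subgroup.zpowers_eq_closure, Nat.card_zpowers]
    exact orderOf_eq_prime (z_sq hl) (z_ne_one hl hk)
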